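/- Let n be even, let A be an abelian group of order n, and let G = D(A) act on the n left cosets of H = ⟨x⟩. If C is an inverse-closed set of derangements of G with A \ {1} ⊆ C ⊆ Der(G), then α(Cay(G, C)) = 2. -/

import Mathlib

/-- The Cayley graph of a group `Γ` with (inverse-closed) connection set `C`:
`g` and `h` are adjacent iff they are distinct and `g⁻¹ * h ∈ C` (symmetrized). -/
def cayley (Γ : Type*) [Group Γ] (C : Set Γ) : SimpleGraph Γ where
  Adj g h := g ≠ h ∧ g⁻¹ * h ∈ C ∧ h⁻¹ * g ∈ C
  symm := ⟨fun _ _ ⟨hne, h1, h2⟩ => ⟨hne.symm, h2, h1⟩⟩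
  loopless := ⟨fun _ ⟨hne, _⟩ => hne rfl⟩

/-- A set of vertices of a graph is independent if its elements are pairwise non-adjacent. -/
def IsIndepSet {V : Type*} (X : SimpleGraph V) (s : Set V) : Prop :=
  s.Pairwise fun a b => ¬ X.Adj a b

/-- The independence number of a graph: the maximum size of an independent set. -/
noncomputable def indepNum {V : Type*} (X : SimpleGraph V) : ℕ :=
  sSup {k | ∃ s : Finset V, IsIndepSet X ↑s ∧ s.card = k}

/-- The set of derangements of a permutation group `G ≤ Sym(n)`: the elements of `G`
fixing no point of `{1,…,n}`. -/
def der {n : ℕ} (G : Subgroup (Equiv.Perm (Fin n))) : Set G :=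
  {σ : G | ∀ i : Fin n, (σ : Equiv.Perm (Fin n)) i ≠ i}
/-- The set of derangements of the action of `G` on the left cosets of `H`:
the elements of `G` fixing no coset. -/
def derQ (G : Type*) [Group G] (H : Subgroup G) : Set G :=
  {g : G | ∀ c : G ⧸ H, g • c ≠ c}

/-- Let `n` be even, `A` abelian of order `n`, and `G = D(A)` (presented
abstractly) acting on the left cosets of `H = ⟨x⟩`. If `C` is an inverse-closed set of
derangements with `A \ {1} ⊆ C ⊆ Der(G)`, then `α(Cay(G, C)) = 2`. -/
theorem stmt_13 {G : Type*} [Group G] [Fintype G]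
    (A : Subgroup G) (hcomm : ∀ a ∈ A, ∀ b ∈ A, a * b = b * a)
    (hEven : Even (Nat.card A))
    (x : G) (hx2 : x ^ 2 = 1) (hxA : x ∉ A) (hindex : A.index = 2)
    (hconj : ∀ a ∈ A, x * a * x = a⁻¹)
    (C : Set G) (hCinv : ∀ c ∈ C, c⁻¹ ∈ C)
    (hC1 : ∀ a : G, a ∈ A → a ≠ 1 → a ∈ C)
    (hC2 : C ⊆ derQ G (Subgroup.zpowers x)) :
    indepNum (cayley G C) = 2 := by
  classical
  -- x ∉ C, since x fixes the coset H
  have hxC : x ∉ C := by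
    intro hxc
    have := hC2 hxc ((1 : G) : G ⧸ Subgroup.zpowers x)
    apply this
    show ((x * 1 : G) : G ⧸ Subgroup.zpowers x) = ((1 : G) : G ⧸ Subgroup.zpowers x)
    rw [QuotientGroup.eq]
    simp
  have hx1 : x ≠ 1 := fun h => hxA (h ▸ A.one_mem)
  -- the set of sizes
  set S : Set ℕ := {k | ∃ s : Finset G, IsIndepSet (cayley G C) ↑s ∧ s.card = k} with hS
  -- 2 ∈ S
  have h2S : 2 ∈ S := by
    refine ⟨{1, x}, ?_, by simp [hx1.symm]⟩
    intro a ha b hb hab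
    simp only [Finset.coe_insert, Finset.coe_singleton, Set.mem_insert_iff,
      Set.mem_singleton_iff] at ha hb
    rintro ⟨hne, hc1, hc2⟩
    rcases ha with rfl | rfl <;> rcases hb with rfl | rfl
    · exact hab rfl
    · exact hxC (by simpa using hc1)
    · exact hxC (by simpa using hc2)
    · exact hab rfl
  -- upper bound
  have hub : ∀ k ∈ S, k ≤ 2 := by
    rintro k ⟨s, hind, rfl⟩
    by_contra hk
    push_neg at hk
    have : Finite (G ⧸ A) := Quotient.finite _
    have : Fintype (G ⧸ A) := Fintype.ofFinite _
    have hcard : (Finset.univ : Finset (G ⧸ A)).card = 2 := by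
      rw [Finset.card_univ, ← Nat.card_eq_fintype_card]
      simpa [Subgroup.index] using hindex
    obtain ⟨g, hg, h, hh, hne, heq⟩ :=
      Finset.exists_ne_map_eq_of_card_lt_of_maps_to
        (t := (Finset.univ : Finset (G ⧸ A)))
        (by omega : (Finset.univ : Finset (G ⧸ A)).card < s.card)
        (fun a _ => Finset.mem_univ ((a : G) : G ⧸ A))
    have hmem : g⁻¹ * h ∈ A := (QuotientGroup.eq).mp heq
    have hne1 : g⁻¹ * h ≠ 1 := by
      intro h1
      exact hne (by rw [inv_mul_eq_one] at h1; exact h1)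
    have hC : g⁻¹ * h ∈ C := hC1 _ hmem hne1
    exact hind (Finset.mem_coe.mpr hg) (Finset.mem_coe.mpr hh) hne ⟨hne, hC, by simpa [mul_inv_rev] using hCinv _ hC⟩
  have : indepNum (cayley G C) = sSup S := by rw [indepNum, hS]
  rw [this]
  exact le_antisymm (csSup_le ⟨2, h2S⟩ hub) (le_csSup ⟨2, hub⟩ h2S)
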